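/- Let V be an ℝ-linear subspace of ℝⁿ and V^⊥ its orthogonal complement. Let L be a Lagrangian subspace of ℝⁿ ⊕ ℝⁿ with V × {0} ⊆ L, and let X := {z ∈ L : z is orthogonal to V × {0} with respect to the standard inner product on ℝⁿ ⊕ ℝⁿ}. Then X ⊆ V^⊥ × V^⊥, the symplectic form ω₀ vanishes identically on X, and dim X = n − dim V; that is, X is a Lagrangian subspace of V^⊥ ⊕ V^⊥ (with the restricted symplectic form). -/

import Mathlib

/-- intermediate claim in the proof of Lemma 2.2 of the paper.
Let `L` be a Lagrangian subspace of ℝⁿ ⊕ ℝⁿ (standard symplectic form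
ω₀((x,y),(x',y')) = ⟪x,y'⟫ − ⟪y,x'⟫) containing `V × {0}`, and let `X` be the
orthogonal complement of `V × {0}` inside `L` (with respect to the standard
inner product ⟪(x,y),(x',y')⟫ = ⟪x,x'⟫ + ⟪y,y'⟫ on ℝⁿ ⊕ ℝⁿ).  Then
`X ⊆ Vᗮ × Vᗮ`, ω₀ vanishes identically on `X`, and `dim X = n − dim V`;
i.e. `X` is a Lagrangian subspace of `Vᗮ ⊕ Vᗮ`. -/
theorem orthogonal_complement_in_lagrangian
    (n : ℕ) (V : Submodule ℝ (EuclideanSpace ℝ (Fin n)))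
    (L : Submodule ℝ (EuclideanSpace ℝ (Fin n) × EuclideanSpace ℝ (Fin n)))
    (hdim : Module.finrank ℝ L = n)
    (hiso : ∀ z ∈ L, ∀ z' ∈ L,
      (inner ℝ z.1 z'.2 : ℝ) - (inner ℝ z.2 z'.1 : ℝ) = 0)
    (hVL : V.prod (⊥ : Submodule ℝ (EuclideanSpace ℝ (Fin n))) ≤ L)
    (X : Submodule ℝ (EuclideanSpace ℝ (Fin n) × EuclideanSpace ℝ (Fin n)))
    (hX : ∀ z, z ∈ X ↔ z ∈ L ∧ ∀ v ∈ V,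
      (inner ℝ z.1 v : ℝ) + (inner ℝ z.2 (0 : EuclideanSpace ℝ (Fin n)) : ℝ) = 0) :
    (∀ z ∈ X, z.1 ∈ Vᗮ ∧ z.2 ∈ Vᗮ) ∧
    (∀ z ∈ X, ∀ z' ∈ X, (inner ℝ z.1 z'.2 : ℝ) - (inner ℝ z.2 z'.1 : ℝ) = 0) ∧
    Module.finrank ℝ X = n - Module.finrank ℝ V := by
  set W := V.prod (⊥ : Submodule ℝ (EuclideanSpace ℝ (Fin n))) with hW
  refine ⟨?_, ?_, ?_⟩
  · intro z hz
    obtain ⟨hzL, hzo⟩ := (hX z).mp hz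
    constructor
    · intro v hv
      have := hzo v hv
      simp only [inner_zero_right, add_zero] at this
      rw [real_inner_comm]; exact this
    · intro v hv
      have hvL : ((v, 0) : EuclideanSpace ℝ (Fin n) × EuclideanSpace ℝ (Fin n)) ∈ L :=
        hVL ⟨hv, Submodule.zero_mem _⟩
      have := hiso z hzL (v, 0) hvL
      simp only [inner_zero_right, zero_sub, neg_eq_zero] at this
      rw [real_inner_comm]; exact this
  · intro z hz z' hz'
    exact hiso z ((hX z).mp hz).1 z' ((hX z').mp hz').1
  · set E := EuclideanSpace ℝ (Fin n)
    let e : (E × E) ≃ₗ[ℝ] WithLp 2 (E × E) := (WithLp.linearEquiv 2 ℝ (E × E)).symm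
    haveI : FiniteDimensional ℝ (WithLp 2 (E × E)) :=
      Module.Finite.equiv e
    have hle : W.map e.toLinearMap ≤ L.map e.toLinearMap := Submodule.map_mono hVL
    have hXeq : X.map e.toLinearMap = (W.map e.toLinearMap)ᗮ ⊓ L.map e.toLinearMap := by
      ext z
      rw [Submodule.mem_map_equiv, Submodule.mem_inf, Submodule.mem_map_equiv, hX]
      constructor
      · rintro ⟨hzL, h⟩
        refine ⟨?_, hzL⟩
        intro w hw
        rw [Submodule.mem_map_equiv] at hw
        obtain ⟨hv, hw0⟩ := hw
        replace hw0 : (e.symm w).2 = (0 : E) := (Submodule.mem_bot ℝ).mp hw0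
        have h2 := h _ hv
        simp only [inner_zero_right, add_zero] at h2
        rw [WithLp.prod_inner_apply]
        have hw0' : (e.symm w).2 = (0 : E) := hw0
        have hgoal : (inner ℝ (e.symm w).1 ((e.symm z).1) : ℝ)
            + (inner ℝ (e.symm w).2 ((e.symm z).2) : ℝ) = 0 := by
          rw [hw0', inner_zero_left, add_zero, real_inner_comm]; exact h2
        exact hgoal
      · rintro ⟨ho, hzL⟩
        refine ⟨hzL, fun v hv => ?_⟩
        have h2 := ho (e ((v, 0) : E × E)) ⟨((v, 0) : E × E), ⟨hv, Submodule.zero_mem _⟩, rfl⟩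
        rw [WithLp.prod_inner_apply] at h2
        have h3 : (inner ℝ v (e.symm z).1 : ℝ) + (inner ℝ (0 : E) (e.symm z).2 : ℝ) = 0 := h2
        simp only [inner_zero_left, add_zero] at h3
        simp only [inner_zero_right, add_zero]
        rw [real_inner_comm]
        exact h3
    have hWfin : Module.finrank ℝ (W.map e.toLinearMap) = Module.finrank ℝ V := by
      rw [LinearEquiv.finrank_map_eq, hW, ← Submodule.map_inl V]
      exact (Submodule.equivMapOfInjective _ LinearMap.inl_injective V).finrank_eq.symm
    have hLfin : Module.finrank ℝ (L.map e.toLinearMap) = n := by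
      rw [LinearEquiv.finrank_map_eq]; exact hdim
    have hXfin : Module.finrank ℝ (X.map e.toLinearMap) = Module.finrank ℝ X :=
      LinearEquiv.finrank_map_eq e X
    have key := Submodule.finrank_add_inf_finrank_orthogonal (𝕜 := ℝ) hle
    rw [hLfin, hWfin, ← hXeq, hXfin] at key
    omega
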